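/- Let m ∈ ℕ, α₁, ..., α_m ∈ (0,2), B := diag(1/α₁, ..., 1/α_m) and B̃ := B ⊕ B ∈ L(ℝ^{2m}) (block diagonal). Let ψ̃ : ℝ^{2m} → ℝ be continuous with ψ̃(R x) = ψ̃(x) for every x ∈ ℝ^{2m} and every R ∈ 𝒯(2m), and r·ψ̃(x) = ψ̃(r^{B̃} x) for all r > 0 and x ∈ ℝ^{2m}. Let A be a real m×m matrix with AB = BA. Then for every z ∈ ℂ and every j ∈ {1, ..., m}: ψ̃( ((Re z)·A e_j, −(Im z)·A e_j) ) = |z|^{α_j} · ψ̃( (A e_j, 0) ), where e_j is the j-th standard basis vector of ℝ^m and elements of ℝ^{2m} are written as pairs of vectors in ℝ^m. -/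

import Mathlib

open MeasureTheory Filter Topology Matrix Real
open scoped RealInnerProductSpace

noncomputable section

abbrev Vec (m : ℕ) := EuclideanSpace ℝ (Fin m)

/-- The continuous linear map on Euclidean space induced by a matrix. -/
def mulVecL {m : ℕ} (A : Matrix (Fin m) (Fin m) ℝ) : Vec m →L[ℝ] Vec m :=
  LinearMap.toContinuousLinearMap (Matrix.toEuclideanLin A)

/-- `matPow s A = s ^ A = exp ((log s) • A)`, the matrix exponential power. -/
def matPow {m : ℕ} (s : ℝ) (A : Matrix (Fin m) (Fin m) ℝ) : Matrix (Fin m) (Fin m) ℝ :=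
  NormedSpace.exp (Real.log s • A)

lemma mulVecL_apply' {m : ℕ} (A : Matrix (Fin m) (Fin m) ℝ) (x : Vec m) (i : Fin m) :
    mulVecL A x i = (A *ᵥ (fun k => x k)) i := rfl

lemma mulVecL_mul {m : ℕ} (A B : Matrix (Fin m) (Fin m) ℝ) (x : Vec m) :
    mulVecL A (mulVecL B x) = mulVecL (A * B) x := by
  ext i
  simp [mulVecL_apply', mulVec_mulVec]

lemma mulVecL_diag_single {m : ℕ} (d : Fin m → ℝ) (j : Fin m) :
    mulVecL (Matrix.diagonal d) (EuclideanSpace.single j 1) =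
      d j • EuclideanSpace.single j 1 := by
  ext i
  simp only [mulVecL_apply', mulVec_diagonal, PiLp.smul_apply, smul_eq_mul,
    EuclideanSpace.single_apply]
  by_cases h : i = j <;> simp [h]

lemma matPow_diag {m : ℕ} {r : ℝ} (hr : 0 < r) (d : Fin m → ℝ) :
    matPow r (Matrix.diagonal d) = Matrix.diagonal (fun i => r ^ (d i)) := by
  rw [matPow, ← diagonal_smul, Matrix.exp_diagonal]
  have h : NormedSpace.exp (Real.log r • d) = fun i => r ^ d i := by
    funext i
    rw [Pi.coe_exp, ← Real.exp_eq_exp_ℝ]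
    simp [Real.rpow_def_of_pos hr, mul_comm]
  rw [h]

/-- If `ψ̃` on `ℝ^{2m} = ℝ^m × ℝ^m` is invariant under the block
rotations `𝒯(2m)`, scales as `r·ψ̃(x) = ψ̃(r^{B̃}x)` with `B̃ = B ⊕ B`,
`B = diag(1/α₁,…,1/α_m)`, and `A` commutes with `B`, then
`ψ̃((Re z)·Ae_j, −(Im z)·Ae_j) = |z|^{α_j}·ψ̃(Ae_j, 0)`. -/
theorem isotropic_component_identity {m : ℕ}
    (α : Fin m → ℝ) (hα : ∀ j, α j ∈ Set.Ioo (0 : ℝ) 2)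
    (ψ : Vec m × Vec m → ℝ) (hψc : Continuous ψ)
    (hrot : ∀ β : ℝ, 0 ≤ β → β < 2 * π → ∀ x y : Vec m,
      ψ (Real.cos β • x + Real.sin β • y, (-Real.sin β) • x + Real.cos β • y) = ψ (x, y))
    (hscale : ∀ r : ℝ, 0 < r → ∀ x y : Vec m,
      r * ψ (x, y) = ψ (mulVecL (matPow r (Matrix.diagonal fun j => (α j)⁻¹)) x,
        mulVecL (matPow r (Matrix.diagonal fun j => (α j)⁻¹)) y))
    (A : Matrix (Fin m) (Fin m) ℝ)
    (hcomm : A * Matrix.diagonal (fun j => (α j)⁻¹) =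
      Matrix.diagonal (fun j => (α j)⁻¹) * A) :
    ∀ (z : ℂ) (j : Fin m),
      ψ (z.re • mulVecL A (EuclideanSpace.single j 1),
        (-z.im) • mulVecL A (EuclideanSpace.single j 1)) =
      ‖z‖ ^ α j * ψ (mulVecL A (EuclideanSpace.single j 1), 0) := by
  intro z j
  have hαj := hα j
  have hαj0 : α j ≠ 0 := ne_of_gt hαj.1
  set v : Vec m := mulVecL A (EuclideanSpace.single j 1) with hv
  -- ψ(0,0) = 0
  have hψ0 : ψ (0, 0) = 0 := by
    have h2 := hscale 2 (by norm_num) 0 0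
    simp only [map_zero] at h2
    linarith
  -- scaling step
  have hscal : ∀ s : ℝ, 0 < s → ψ (s • v, 0) = s ^ α j * ψ (v, 0) := by
    intro s hs
    set r : ℝ := s ^ α j with hrdef
    have hr : 0 < r := Real.rpow_pos_of_pos hs _
    set M : Matrix (Fin m) (Fin m) ℝ :=
      matPow r (Matrix.diagonal fun j => (α j)⁻¹) with hMdef
    have hMcomm : A * M = M * A := by
      have h1 : Commute A (Matrix.diagonal fun j => (α j)⁻¹) := hcomm
      have h2 : Commute A (Real.log r • (Matrix.diagonal fun j => (α j)⁻¹)) :=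
        h1.smul_right _
      exact h2.exp_right
    have hMv : mulVecL M v = s • v := by
      rw [hv, mulVecL_mul, ← hMcomm, ← mulVecL_mul, hMdef,
        matPow_diag hr, mulVecL_diag_single, _root_.map_smul]
      congr 1
      rw [hrdef, ← Real.rpow_mul hs.le, mul_inv_cancel₀ hαj0, Real.rpow_one]
    have := hscale r hr v 0
    rw [map_zero, hMv] at this
    rw [← this, hrdef]
  rcases eq_or_ne z 0 with rfl | hz
  · simp only [Complex.zero_re, Complex.zero_im, neg_zero, zero_smul, map_zero]
    rw [hψ0, norm_zero, Real.zero_rpow hαj0, zero_mul]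
  · -- rotation step
    have ha : 0 < ‖z‖ := norm_pos_iff.mpr hz
    set θ : ℝ := Complex.arg z with hθ
    set β : ℝ := if θ < 0 then θ + 2 * π else θ with hβ
    have hθ1 : -π < θ := Complex.neg_pi_lt_arg z
    have hθ2 : θ ≤ π := Complex.arg_le_pi z
    have hπ : (0:ℝ) < π := Real.pi_pos
    have hβ0 : 0 ≤ β := by
      rw [hβ]; split_ifs with h
      · linarith
      · linarith
    have hβ2 : β < 2 * π := by
      rw [hβ]; split_ifs with h
      · linarith
      · linarith
    have hcos : Real.cos β = Real.cos θ := by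
      rw [hβ]; split_ifs with h
      · rw [Real.cos_add_two_pi]
      · rfl
    have hsin : Real.sin β = Real.sin θ := by
      rw [hβ]; split_ifs with h
      · rw [Real.sin_add_two_pi]
      · rfl
    have hre : ‖z‖ * Real.cos θ = z.re := Complex.norm_mul_cos_arg z
    have him : ‖z‖ * Real.sin θ = z.im := Complex.norm_mul_sin_arg z
    have hr := hrot β hβ0 hβ2 (‖z‖ • v) 0
    have e1 : Real.cos β • (‖z‖ • v) + Real.sin β • (0 : Vec m)
        = z.re • v := by
      rw [smul_zero, add_zero, smul_smul, hcos, mul_comm, hre]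
    have e2 : (-Real.sin β) • (‖z‖ • v) + Real.cos β • (0 : Vec m)
        = (-z.im) • v := by
      rw [smul_zero, add_zero, smul_smul, hsin, neg_mul, mul_comm, him]
    rw [e1, e2] at hr
    rw [hr, hscal _ ha]
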